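/- Let A be a unital C*-algebra, X and Y compact Hausdorff spaces, and ι_C : C(X) → A, ι_D : C(Y) → A unital *-homomorphisms forming a relatively diffuse pair. Let K be a complex Hilbert space and let φ : A → B(K), φ_C : ℓ∞(X) → B(K), φ_D : ℓ∞(Y) → B(K) be unital *-homomorphisms into the bounded operators on K such that φ_C composed with the inclusion C(X) ⊆ ℓ∞(X) equals φ ∘ ι_C and φ_D composed with the inclusion C(Y) ⊆ ℓ∞(Y) equals φ ∘ ι_D. Suppose moreover that for every vector v ∈ K the family (φ_C(δ_x) v)_{x∈X} is summable in K with sum v, and the family (φ_D(δ_y) v)_{y∈Y} is summable in K with sum v. Then K = 0, i.e., every vector of K is zero. -/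

import Mathlib

open MeasureTheory
open scoped ENNReal ComplexOrder

/-- The canonical inclusion of `C(X)` into `ℓ∞(X)` for a compact Hausdorff space `X`,
sending a continuous function to the corresponding bounded function. -/
noncomputable def inclCLinf {X : Type*} [TopologicalSpace X] [CompactSpace X]
    (f : C(X, ℂ)) : lp (fun _ : X => ℂ) ∞ :=
  ⟨fun x => f x, memℓp_infty (isCompact_range ((map_continuous f).norm)).bddAbove⟩

open scoped Classical in
/-- The indicator function `δ_x ∈ ℓ∞(X)` of the singleton `{x}`. -/
noncomputable def linfDelta {X : Type*} (x : X) : lp (fun _ : X => ℂ) ∞ :=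
  ⟨fun z => if z = x then 1 else 0,
    memℓp_infty ⟨1, by rintro r ⟨z, rfl⟩; dsimp only; split <;> simp⟩⟩

open scoped Classical in
lemma linfDelta_apply {X : Type*} (x z : X) :
    (linfDelta x : ∀ _ : X, ℂ) z = if z = x then 1 else 0 := rfl

lemma inclCLinf_apply {X : Type*} [TopologicalSpace X] [CompactSpace X]
    (f : C(X, ℂ)) (z : X) : (inclCLinf f : ∀ _ : X, ℂ) z = f z := rfl

lemma linfDelta_mul_self {X : Type*} (x : X) :
    linfDelta (X := X) x * linfDelta x = linfDelta x := by
  classical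
  apply Subtype.ext
  have h := lp.infty_coeFn_mul (linfDelta (X := X) x) (linfDelta x)
  funext z
  have := congrFun h z
  simp only [Pi.mul_apply, linfDelta_apply] at this ⊢
  rw [show ((linfDelta (X := X) x * linfDelta x : lp (fun _ : X => ℂ) ∞) : ∀ _ : X, ℂ) z
    = _ from this]
  split <;> simp

lemma star_linfDelta {X : Type*} (x : X) : star (linfDelta (X := X) x) = linfDelta x := by
  classical
  apply Subtype.ext
  have h := lp.coeFn_star (linfDelta (X := X) x)
  funext z
  have := congrFun h z
  simp only [Pi.star_apply, linfDelta_apply] at this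
  rw [show ((star (linfDelta (X := X) x) : lp (fun _ : X => ℂ) ∞) : ∀ _ : X, ℂ) z = _ from this]
  simp only [linfDelta_apply]
  split <;> simp

lemma incl_mul_delta {X : Type*} [TopologicalSpace X] [CompactSpace X]
    (g : C(X, ℂ)) (x : X) :
    inclCLinf g * linfDelta x = g x • linfDelta x := by
  classical
  apply Subtype.ext
  have h := lp.infty_coeFn_mul (inclCLinf g) (linfDelta x)
  have h2 := lp.coeFn_smul (g x) (linfDelta (X := X) x)
  funext z
  have hz := congrFun h z
  have hz2 := congrFun h2 z
  simp only [Pi.mul_apply, Pi.smul_apply, inclCLinf_apply, linfDelta_apply] at hz hz2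
  rw [show ((inclCLinf g * linfDelta x : lp (fun _ : X => ℂ) ∞) : ∀ _ : X, ℂ) z = _ from hz,
    show ((g x • linfDelta x : lp (fun _ : X => ℂ) ∞) : ∀ _ : X, ℂ) z = _ from hz2]
  by_cases hcase : z = x
  · subst hcase; simp
  · simp [hcase]

/-- A pair of unital `*`-homomorphisms `ι_C : C(X) → A`, `ι_D : C(Y) → A` is *relatively
diffuse* if every state `ψ` of `A` whose composite with `ι_D` is multiplicative (i.e. a
character of `C(Y)`) is, on `C(X)`, given by integration against an atomless regular Borel
probability measure on `X`. -/
def RelativelyDiffuse {A : Type*} [CStarAlgebra A]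
    {X Y : Type*} [TopologicalSpace X] [CompactSpace X] [T2Space X]
    [MeasurableSpace X] [BorelSpace X]
    [TopologicalSpace Y] [CompactSpace Y] [T2Space Y]
    (ιC : C(X, ℂ) →⋆ₐ[ℂ] A) (ιD : C(Y, ℂ) →⋆ₐ[ℂ] A) : Prop :=
  ∀ ψ : A →ₗ[ℂ] ℂ, ψ 1 = 1 → (∀ a : A, 0 ≤ ψ (star a * a)) →
    (∀ g h : C(Y, ℂ), ψ (ιD (g * h)) = ψ (ιD g) * ψ (ιD h)) →
    ∃ μ : Measure X, μ.Regular ∧ IsProbabilityMeasure μ ∧ NoAtoms μ ∧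
      ∀ f : C(X, ℂ), ψ (ιC f) = ∫ x, f x ∂μ

set_option maxHeartbeats 1000000

/-- **Theorem (no nontrivial normal spatial discretization of relatively diffuse pairs).**
Suppose `C(X)` and `C(Y)` sit relatively diffusely in a unital C*-algebra `A`, and
`φ : A → B(K)`, `φ_C : ℓ∞(X) → B(K)`, `φ_D : ℓ∞(Y) → B(K)` are unital `*`-homomorphisms
with `φ_C` (resp. `φ_D`) extending `φ ∘ ι_C` (resp. `φ ∘ ι_D`).  If moreover for every
`v ∈ K` the families `(φ_C(δ_x) v)_x` and `(φ_D(δ_y) v)_y` are summable with sum `v`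
(normality of `φ_C` and `φ_D`), then `K = 0`. -/
theorem stmt5 {A : Type*} [CStarAlgebra A]
    {K : Type*} [NormedAddCommGroup K] [InnerProductSpace ℂ K] [CompleteSpace K]
    {X Y : Type*} [TopologicalSpace X] [CompactSpace X] [T2Space X]
    [MeasurableSpace X] [BorelSpace X]
    [TopologicalSpace Y] [CompactSpace Y] [T2Space Y]
    (ιC : C(X, ℂ) →⋆ₐ[ℂ] A) (ιD : C(Y, ℂ) →⋆ₐ[ℂ] A)
    (hdiff : RelativelyDiffuse ιC ιD)
    (φ : A →⋆ₐ[ℂ] (K →L[ℂ] K))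
    (φC : lp (fun _ : X => ℂ) ∞ →⋆ₐ[ℂ] (K →L[ℂ] K))
    (φD : lp (fun _ : Y => ℂ) ∞ →⋆ₐ[ℂ] (K →L[ℂ] K))
    (hφC : ∀ f : C(X, ℂ), φC (inclCLinf f) = φ (ιC f))
    (hφD : ∀ f : C(Y, ℂ), φD (inclCLinf f) = φ (ιD f))
    (hCnormal : ∀ v : K, HasSum (fun x : X => φC (linfDelta x) v) v)
    (hDnormal : ∀ v : K, HasSum (fun y : Y => φD (linfDelta y) v) v) :
    ∀ v : K, v = 0 := by
  classical
  intro v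
  by_contra hv
  -- find y with φD (δ_y) v ≠ 0
  obtain ⟨y, hu⟩ : ∃ y : Y, φD (linfDelta y) v ≠ 0 := by
    by_contra h
    push_neg at h
    have h0 := hDnormal v
    simp only [h] at h0
    exact hv (h0.unique hasSum_zero)
  set u : K := φD (linfDelta y) v with hu_def
  set w : K := ((‖u‖ : ℂ))⁻¹ • u with hw_def
  have hu_norm : ‖u‖ ≠ 0 := norm_ne_zero_iff.mpr hu
  have hw_norm : ‖w‖ = 1 := by
    rw [hw_def, norm_smul]
    simp [hu_norm]
  have hpu : φD (linfDelta y) u = u := by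
    rw [hu_def, ← ContinuousLinearMap.mul_apply, ← map_mul, linfDelta_mul_self]
  have hpw : φD (linfDelta y) w = w := by
    rw [hw_def, (φD (linfDelta y)).map_smul, hpu]
  have hDg : ∀ g : C(Y, ℂ), φ (ιD g) w = g y • w := by
    intro g
    rw [← hφD]
    calc φD (inclCLinf g) w = φD (inclCLinf g) (φD (linfDelta y) w) := by rw [hpw]
      _ = φD (inclCLinf g * linfDelta y) w := by
            rw [map_mul]; rfl
      _ = φD (g y • linfDelta y) w := by rw [incl_mul_delta]
      _ = g y • w := by rw [_root_.map_smul φD]; rw [ContinuousLinearMap.smul_apply, hpw]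
  -- the state
  set ψ : A →ₗ[ℂ] ℂ :=
    { toFun := fun a => @inner ℂ K _ w (φ a w)
      map_add' := by
        intro a b
        simp only [map_add, ContinuousLinearMap.add_apply, inner_add_right]
      map_smul' := by
        intro c a
        simp only [_root_.map_smul, ContinuousLinearMap.smul_apply, inner_smul_right,
          RingHom.id_apply, smul_eq_mul] } with hψ_def
  have hψ_apply : ∀ a : A, ψ a = @inner ℂ K _ w (φ a w) := fun a => rfl
  have hww : @inner ℂ K _ w w = 1 := by
    rw [inner_self_eq_norm_sq_to_K, hw_norm]; norm_num
  have h1 : ψ 1 = 1 := by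
    rw [hψ_apply, map_one, ContinuousLinearMap.one_apply, hww]
  have hpos : ∀ a : A, 0 ≤ ψ (star a * a) := by
    intro a
    rw [hψ_apply, map_mul, map_star, ContinuousLinearMap.mul_apply,
      ContinuousLinearMap.star_eq_adjoint, ContinuousLinearMap.adjoint_inner_right,
      inner_self_eq_norm_sq_to_K]
    norm_cast
    have h0 : (0:ℝ) ≤ ‖(φ a) w‖ ^ 2 := by positivity
    exact Complex.real_le_real.mpr h0
  have hmult : ∀ g h : C(Y, ℂ), ψ (ιD (g * h)) = ψ (ιD g) * ψ (ιD h) := by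
    intro g h
    have key : ∀ g : C(Y, ℂ), ψ (ιD g) = g y := by
      intro g
      rw [hψ_apply, hDg, inner_smul_right, hww, mul_one]
    rw [key, key, key]
    simp
  obtain ⟨μ, hreg, hprob, hatom, hint⟩ := hdiff ψ h1 hpos hmult
  -- each φC (δ_x) kills w
  have hqw : ∀ x : X, φC (linfDelta x) w = 0 := by
    intro x
    have key : ∀ ε : ℝ, 0 < ε → ‖φC (linfDelta x) w‖ ^ 2 < ε := by
      intro ε hε
      have hx0 : μ {x} = 0 := hatom.measure_singleton x
      obtain ⟨U, hxU, hUopen, hUlt⟩ :=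
        Set.exists_isOpen_lt_of_lt {x} (ENNReal.ofReal ε)
          (by rw [hx0]; exact ENNReal.ofReal_pos.mpr hε)
      have hxU' : x ∈ U := hxU rfl
      obtain ⟨f, hf0, hf1, hf01⟩ :=
        exists_continuous_zero_one_of_isClosed hUopen.isClosed_compl isClosed_singleton
          (Set.disjoint_left.mpr fun z hz hz' => hz (by rwa [Set.mem_singleton_iff.mp hz']))
      have hfx : f x = 1 := hf1 rfl
      have hf_nonneg : ∀ z, 0 ≤ f z := fun z => (hf01 z).1
      have hf_le_one : ∀ z, f z ≤ 1 := fun z => (hf01 z).2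
      set fC : C(X, ℂ) := ⟨fun z => (f z : ℂ), Complex.continuous_ofReal.comp f.continuous⟩
        with hfC_def
      -- the square root element
      set gfun : X → ℂ := fun z => (Real.sqrt (f z - if z = x then 1 else 0) : ℂ) with hg_def
      have hg_mem : Memℓp gfun ∞ := by
        apply memℓp_infty
        refine ⟨1, ?_⟩
        rintro r ⟨z, rfl⟩
        simp only [hg_def, Complex.norm_real, Real.norm_eq_abs,
          abs_of_nonneg (Real.sqrt_nonneg _)]
        rw [Real.sqrt_le_one]
        split <;> [linarith [hf_le_one z]; linarith [hf_le_one z]]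
      set g : lp (fun _ : X => ℂ) ∞ := ⟨gfun, hg_mem⟩ with hgl_def
      have hdecomp : inclCLinf fC = linfDelta x + star g * g := by
        apply Subtype.ext
        have hmul := lp.infty_coeFn_mul (star g) g
        have hadd := lp.coeFn_add (linfDelta (X := X) x) (star g * g)
        have hstar := lp.coeFn_star g
        funext z
        have hz : ((linfDelta x + star g * g : lp (fun _ : X => ℂ) ∞) : ∀ _ : X, ℂ) z
            = (linfDelta x : ∀ _ : X, ℂ) z + (star (g z)) * (g z) := by
          rw [congrFun hadd z]
          simp only [Pi.add_apply]
          rw [congrFun hmul z]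
          simp only [Pi.mul_apply]
          rw [congrFun hstar z]
          rfl
        rw [hz]
        show (fC z : ℂ) = _
        have hgz : (g : ∀ _ : X, ℂ) z = (Real.sqrt (f z - if z = x then 1 else 0) : ℂ) := rfl
        rw [hgz, linfDelta_apply]
        simp only [hfC_def, ContinuousMap.coe_mk]
        rw [show star ((Real.sqrt (f z - if z = x then 1 else 0) : ℂ))
          = ((Real.sqrt (f z - if z = x then 1 else 0) : ℂ)) by
            rw [Complex.star_def, Complex.conj_ofReal]]
        rw [← Complex.ofReal_mul]
        by_cases hcase : z = x
        · subst hcase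
          simp [hfx]
        · simp only [hcase, if_false, sub_zero]
          rw [Real.mul_self_sqrt (hf_nonneg z)]
          simp
      set T : K →L[ℂ] K := φC (linfDelta x) with hT_def
      have hTsa : star T = T := by rw [hT_def, ← map_star, star_linfDelta]
      have hTw : @inner ℂ K _ w (T w) = ((‖T w‖ ^ 2 : ℝ) : ℂ) := by
        have : T w = T (T w) := by
          rw [hT_def, ← ContinuousLinearMap.mul_apply, ← map_mul, linfDelta_mul_self]
        calc @inner ℂ K _ w (T w) = @inner ℂ K _ w (T (T w)) := by rw [← this]
          _ = @inner ℂ K _ (T w) (T w) := by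
              nth_rewrite 1 [← hTsa]
              rw [ContinuousLinearMap.star_eq_adjoint, ContinuousLinearMap.adjoint_inner_right]
          _ = ((‖T w‖ ^ 2 : ℝ) : ℂ) := by
              rw [inner_self_eq_norm_sq_to_K]; norm_cast
      have hGw : @inner ℂ K _ w ((star (φC g) * φC g) w) = ((‖φC g w‖ ^ 2 : ℝ) : ℂ) := by
        rw [ContinuousLinearMap.mul_apply, ContinuousLinearMap.star_eq_adjoint,
          ContinuousLinearMap.adjoint_inner_right, inner_self_eq_norm_sq_to_K]
        norm_cast
      have hIdent : ((∫ z, f z ∂μ : ℝ) : ℂ)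
          = ((‖T w‖ ^ 2 : ℝ) : ℂ) + ((‖φC g w‖ ^ 2 : ℝ) : ℂ) := by
        have h1' : ψ (ιC fC) = ∫ z, fC z ∂μ := hint fC
        have h2' : (∫ z, fC z ∂μ) = ((∫ z, f z ∂μ : ℝ) : ℂ) := by
          simp only [hfC_def, ContinuousMap.coe_mk]
          exact integral_ofReal
        have h3' : ψ (ιC fC) = @inner ℂ K _ w (φC (inclCLinf fC) w) := by
          rw [hψ_apply, hφC]
        rw [h3', hdecomp, map_add, map_mul, map_star, ContinuousLinearMap.add_apply,
          inner_add_right, ← hT_def, hTw, ← map_star, ← map_mul, map_mul, map_star, hGw]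
          at h1'
        rw [← h2']
        exact h1'.symm
      have hIdentR : (∫ z, f z ∂μ) = ‖T w‖ ^ 2 + ‖φC g w‖ ^ 2 := by
        have := hIdent
        rw [← Complex.ofReal_add] at this
        exact_mod_cast this
      -- integral bound
      have hUmeas : MeasurableSet U := hUopen.measurableSet
      have hf_int : Integrable (fun z => f z) μ :=
        f.continuous.integrable_of_hasCompactSupport (HasCompactSupport.of_compactSpace _)
      have hind_int : Integrable (U.indicator fun _ => (1 : ℝ)) μ :=
        (integrable_const 1).indicator hUmeas
      have hmono : (∫ z, f z ∂μ) ≤ ∫ z, U.indicator (fun _ => (1 : ℝ)) z ∂μ := by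
        apply integral_mono hf_int hind_int
        intro z
        by_cases hzU : z ∈ U
        · simp [Set.indicator_of_mem hzU, hf_le_one z]
        · simp [Set.indicator_of_notMem hzU]
          have : f z = 0 := hf0 hzU
          simp [this]
      have hind_val : (∫ z, U.indicator (fun _ => (1 : ℝ)) z ∂μ) = (μ U).toReal := by
        rw [integral_indicator_const (1 : ℝ) hUmeas]; simp [measureReal_def]
      have hμU : (μ U).toReal < ε := ENNReal.toReal_lt_of_lt_ofReal hUlt
      calc ‖φC (linfDelta x) w‖ ^ 2 = ‖T w‖ ^ 2 := by rw [hT_def]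
        _ ≤ ‖T w‖ ^ 2 + ‖φC g w‖ ^ 2 := le_add_of_nonneg_right (by positivity)
        _ = ∫ z, f z ∂μ := hIdentR.symm
        _ ≤ (μ U).toReal := by rw [← hind_val]; exact hmono
        _ < ε := hμU
    have hnn : (0 : ℝ) ≤ ‖φC (linfDelta x) w‖ ^ 2 := by positivity
    have h0 : ‖φC (linfDelta x) w‖ ^ 2 = 0 := by
      by_contra hne
      exact absurd (key _ (lt_of_le_of_ne hnn (Ne.symm hne))) (lt_irrefl _)
    have : ‖φC (linfDelta x) w‖ = 0 := by
      nlinarith [norm_nonneg (φC (linfDelta x) w)]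
    exact norm_eq_zero.mp this
  have hsum := hCnormal w
  simp only [hqw] at hsum
  have : w = 0 := hsum.unique hasSum_zero
  rw [this, norm_zero] at hw_norm
  norm_num at hw_norm
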